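/- A cycle C_n (n ≥ 3) has a fall 3-coloring if and only if 3 divides n. -/

import Mathlib

open SimpleGraph

/-- A fall `k`-coloring of `G`: a partition of the vertex set into `k` color classes
(each class independent) such that every vertex is colorful, i.e. adjacent to at least
one vertex of every color class other than its own. -/
def IsFallColoring {V : Type*} (G : SimpleGraph V) (k : ℕ) (c : V → Fin k) : Prop :=
  (∀ u v, G.Adj u v → c u ≠ c v) ∧
  (∀ v : V, ∀ j : Fin k, j ≠ c v → ∃ w, G.Adj v w ∧ c w = j)

/-- `S` is an independent dominating set of `G`. -/
def IsIndepDomSet {V : Type*} (G : SimpleGraph V) (S : Set V) : Prop :=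
  (∀ u ∈ S, ∀ v ∈ S, ¬ G.Adj u v) ∧ (∀ v : V, v ∉ S → ∃ u ∈ S, G.Adj v u)

open Fin.NatCast Fin.CommRing

theorem cycle_fall_three_iff_three_dvd (n : ℕ) (hn : 3 ≤ n) :
    (∃ c : Fin n → Fin 3, IsFallColoring (cycleGraph n) 3 c) ↔ 3 ∣ n := by
  haveI : NeZero n := ⟨by omega⟩
  have hone : (1 : Fin n).val = 1 := by
    simp [Fin.val_one', Nat.mod_eq_of_lt (by omega : 1 < n)]
  have hadj : ∀ u v : Fin n, (cycleGraph n).Adj u v ↔ u = v + 1 ∨ v = u + 1 := by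
    intro u v
    rw [cycleGraph_adj']
    constructor
    · rintro (h | h)
      · left
        have : u - v = 1 := Fin.ext (by rw [h, hone])
        rw [← this]; ring
      · right
        have : v - u = 1 := Fin.ext (by rw [h, hone])
        rw [← this]; ring
    · rintro (h | h)
      · left; rw [h]; rw [show v + 1 - v = 1 by ring, hone]
      · right; rw [h]; rw [show u + 1 - u = 1 by ring, hone]
  have hadj_succ : ∀ v : Fin n, (cycleGraph n).Adj v (v + 1) := by
    intro v; rw [hadj]; right; rfl
  have hadj_pred : ∀ v : Fin n, (cycleGraph n).Adj v (v - 1) := by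
    intro v; rw [hadj]; left; rw [sub_add_cancel]
  constructor
  · rintro ⟨c, hc, hcol⟩
    -- the three consecutive colors are pairwise distinct
    have triple : ∀ v : Fin n, c (v - 1) ≠ c (v + 1) := by
      intro v hvv
      -- both other colors must appear among the two neighbors
      have h1 : c v + 1 ≠ c v := by
        have : ∀ a : Fin 3, a + 1 ≠ a := by decide
        exact this _
      have h2 : c v + 2 ≠ c v := by
        have : ∀ a : Fin 3, a + 2 ≠ a := by decide
        exact this _
      obtain ⟨w1, hw1, hcw1⟩ := hcol v _ h1
      obtain ⟨w2, hw2, hcw2⟩ := hcol v _ h2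
      have hw : ∀ w : Fin n, (cycleGraph n).Adj v w → w = v + 1 ∨ w = v - 1 := by
        intro w hvw
        rcases (hadj v w).1 hvw with h | h
        · right; rw [h]; ring
        · left; exact h
      have e1 := hw _ hw1
      have e2 := hw _ hw2
      have : c w1 = c w2 := by
        rcases e1 with e1 | e1 <;> rcases e2 with e2 | e2 <;>
          simp only [e1, e2, hvv] at hcw1 hcw2 ⊢ <;> omega
      rw [hcw1, hcw2] at this
      have : ∀ a : Fin 3, a + 1 ≠ a + 2 := by decide
      exact this (c v) (by omega)
    -- constant difference
    set d : Fin 3 := c 1 - c 0 with hd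
    have hd0 : d ≠ 0 := by
      have := hc 0 1 (by rw [hadj]; right; rw [zero_add])
      simp [hd, sub_eq_zero]
      exact fun h => this h.symm
    have hstep : ∀ v : Fin n, c (v + 1) - c v = c v - c (v - 1) := by
      intro v
      have hab : c (v - 1) ≠ c v := hc _ _ ((hadj_pred v).symm)
      have hbc : c v ≠ c (v + 1) := hc _ _ (hadj_succ v)
      have hac : c (v - 1) ≠ c (v + 1) := triple v
      revert hab hbc hac
      generalize c (v - 1) = a; generalize c v = b; generalize c (v + 1) = e
      revert a b e; decide
    have hDconst : ∀ k : ℕ, c ((k : Fin n) + 1) - c (k : Fin n) = d := by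
      intro k
      induction k with
      | zero => simp [hd]
      | succ k ih =>
        have : ((k + 1 : ℕ) : Fin n) = (k : Fin n) + 1 := by push_cast; ring
        rw [this, hstep, add_sub_cancel_right]
        exact ih
    have hval : ∀ k : ℕ, c (k : Fin n) = c 0 + (k : Fin 3) * d := by
      intro k
      induction k with
      | zero => simp
      | succ k ih =>
        have h1 : ((k + 1 : ℕ) : Fin n) = (k : Fin n) + 1 := by push_cast; ring
        have h2 := hDconst k
        rw [h1, sub_eq_iff_eq_add] at *
        rw [h2, ih]
        push_cast
        ring
    have hn0 : c (n : Fin n) = c 0 := by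
      rw [Fin.natCast_self]
    rw [hval n] at hn0
    have hmul : (n : Fin 3) * d = 0 := by
      rwa [add_eq_left] at hn0
    have hzero : (n : Fin 3) = 0 := by
      have key : ∀ a b : Fin 3, b ≠ 0 → a * b = 0 → a = 0 := by decide
      exact key _ _ hd0 hmul
    have : n % 3 = 0 := by
      have := congrArg Fin.val hzero
      rwa [Fin.val_natCast] at this
    omega
  · intro hdvd
    have hsucc : ∀ v : Fin n, (((v + 1 : Fin n)).val : Fin 3) = (v.val : Fin 3) + 1 := by
      intro v
      apply Fin.ext
      simp only [Fin.val_natCast, Fin.val_add, hone]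
      rw [Nat.mod_mod_of_dvd _ hdvd]
      omega
    have hpred : ∀ v : Fin n, (((v - 1 : Fin n)).val : Fin 3) = (v.val : Fin 3) - 1 := by
      intro v
      have := hsucc (v - 1)
      rw [sub_add_cancel] at this
      rw [this]; ring
    refine ⟨fun v => (v.val : Fin 3), ?_, ?_⟩
    · intro u v huv
      have key : ∀ a : Fin 3, a + 1 ≠ a := by decide
      rcases (hadj u v).1 huv with h | h
      · rw [h]; simp only [hsucc]; exact key _
      · rw [h]; simp only [hsucc]; exact fun he => key _ he.symm
    · intro v j hj
      have key : ∀ a j : Fin 3, j ≠ a → j = a + 1 ∨ j = a - 1 := by decide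
      rcases key _ _ hj with h | h
      · exact ⟨v + 1, hadj_succ v, by simp only [hsucc, h]⟩
      · exact ⟨v - 1, hadj_pred v, by simp only [hpred, h]⟩
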